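/- In any first-order structure, the covering relation ⫝ᶜ implies algebraic independence ⫝ᵃ: if C covers A in B, then acl(A∪C) ∩ acl(B∪C) ⊆ acl(C). -/

import Mathlib

open FirstOrder

/-- First-order algebraic closure: `b ∈ Acl L X` iff `b` satisfies a formula with
parameters from `X` that has only finitely many solutions. -/
def Acl (L : FirstOrder.Language) {M : Type*} [L.Structure M] (X : Set M) : Set M :=
  {b | ∃ (n : ℕ) (φ : L.Formula (Fin n ⊕ Fin 1)) (c : Fin n → M),
    (∀ i, c i ∈ X) ∧
    {y : M | φ.Realize (Sum.elim c (fun _ => y))}.Finite ∧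
    φ.Realize (Sum.elim c (fun _ => b))}

namespace CoverAclAux

variable {L : FirstOrder.Language} {M : Type*} [L.Structure M]

lemma elim_comp_map {α β γ : Type*} (v : β → M) (w : γ → M) (g : α → β) :
    (Sum.elim v w) ∘ (Sum.map g (id : γ → γ)) = Sum.elim (v ∘ g) w := by
  funext x; cases x <;> rfl

/-- Upgrade the covering hypothesis to allow the `a`-tuple to take values in `A ∪ C`
and the `b`-tuple to take values in `B ∪ C`. -/
lemma cover_union (A B C : Set M)
    (hcov : ∀ (p q r : ℕ) (φ : L.Formula ((Fin p ⊕ Fin q) ⊕ Fin r))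
      (a : Fin p → M) (b : Fin q → M) (c : Fin r → M),
      (∀ i, a i ∈ A) → (∀ i, b i ∈ B) → (∀ i, c i ∈ C) →
      φ.Realize (Sum.elim (Sum.elim a b) c) →
      ∃ d : Fin q → M, (∀ i, d i ∈ C) ∧ φ.Realize (Sum.elim (Sum.elim a d) c))
    (n m t : ℕ) (Θ : L.Formula ((Fin n ⊕ Fin m) ⊕ Fin t))
    (a' : Fin n → M) (b' : Fin m → M) (u : Fin t → M)
    (ha : ∀ i, a' i ∈ A ∪ C) (hb : ∀ j, b' j ∈ B ∪ C) (hu : ∀ i, u i ∈ C)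
    (hreal : Θ.Realize (Sum.elim (Sum.elim a' b') u)) :
    ∃ d : Fin m → M, (∀ j, d j ∈ C) ∧ Θ.Realize (Sum.elim (Sum.elim a' d) u) := by
  classical
  set PA : Fin n → Prop := fun i => a' i ∈ A with hPA
  set PB : Fin m → Prop := fun j => b' j ∈ B with hPB
  let p := Fintype.card {i // PA i}
  let q := Fintype.card {j // PB j}
  let nA := Fintype.card {i // ¬ PA i}
  let nB := Fintype.card {j // ¬ PB j}
  let eA : {i // PA i} ≃ Fin p := Fintype.equivFin _
  let eB : {j // PB j} ≃ Fin q := Fintype.equivFin _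
  let eA' : {i // ¬ PA i} ≃ Fin nA := Fintype.equivFin _
  let eB' : {j // ¬ PB j} ≃ Fin nB := Fintype.equivFin _
  let gA : Fin n → (Fin p ⊕ Fin q) ⊕ Fin ((t + nA) + nB) := fun i =>
    if h : PA i then Sum.inl (Sum.inl (eA ⟨i, h⟩))
    else Sum.inr (Fin.castAdd nB (Fin.natAdd t (eA' ⟨i, h⟩)))
  let gB : Fin m → (Fin p ⊕ Fin q) ⊕ Fin ((t + nA) + nB) := fun j =>
    if h : PB j then Sum.inl (Sum.inr (eB ⟨j, h⟩))
    else Sum.inr (Fin.natAdd (t + nA) (eB' ⟨j, h⟩))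
  let g : ((Fin n ⊕ Fin m) ⊕ Fin t) → ((Fin p ⊕ Fin q) ⊕ Fin ((t + nA) + nB)) :=
    Sum.elim (Sum.elim gA gB) (fun x => Sum.inr (Fin.castAdd nB (Fin.castAdd nA x)))
  let a : Fin p → M := fun i => a' (eA.symm i)
  let b : Fin q → M := fun j => b' (eB.symm j)
  let c : Fin ((t + nA) + nB) → M :=
    Fin.append (Fin.append u (fun x => a' (eA'.symm x))) (fun x => b' (eB'.symm x))
  have hc : ∀ i, c i ∈ C := by
    intro i
    induction i using Fin.addCases with
    | left i => ?_
    | right i => ?_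
    case left =>
      induction i using Fin.addCases with
      | left i => ?_
      | right i => ?_
      case left => simpa [c, Fin.append_left] using hu i
      case right =>
        have h := (eA'.symm i).2
        have := ha (eA'.symm i)
        simp only [c, Fin.append_left, Fin.append_right]
        rcases this with h' | h'
        · exact absurd h' h
        · exact h'
    case right =>
      have h := (eB'.symm i).2
      have := hb (eB'.symm i)
      simp only [c, Fin.append_right]
      rcases this with h' | h'
      · exact absurd h' h
      · exact h'
  have ha2 : ∀ i, a i ∈ A := fun i => (eA.symm i).2
  have hb2 : ∀ j, b j ∈ B := fun j => (eB.symm j).2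
  have hcompat : ∀ (d₀ : Fin q → M),
      (Sum.elim (Sum.elim a d₀) c) ∘ g =
      Sum.elim (Sum.elim a' (fun j => if h : PB j then d₀ (eB ⟨j, h⟩) else b' j)) u := by
    intro d₀
    funext x
    rcases x with (i | j) | x
    · simp only [Function.comp_apply, g, Sum.elim_inl, gA]
      split_ifs with h
      · simp [a]
      · simp [c, Fin.append_left, Fin.append_right]
    · simp only [Function.comp_apply, g, Sum.elim_inl, Sum.elim_inr, gB]
      split_ifs with h
      · simp
      · simp [c, Fin.append_right]
    · simp [g, c, Fin.append_left]
  have hcompat0 : (Sum.elim (Sum.elim a b) c) ∘ g = Sum.elim (Sum.elim a' b') u := by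
    funext x
    rcases x with (i | j) | x
    · simp only [Function.comp_apply, g, Sum.elim_inl, gA]
      split_ifs with h
      · simp [a]
      · simp [c, Fin.append_left, Fin.append_right]
    · simp only [Function.comp_apply, g, Sum.elim_inl, Sum.elim_inr, gB]
      split_ifs with h
      · simp [b]
      · simp [c, Fin.append_right]
    · simp [g, c, Fin.append_left]
  obtain ⟨d₀, hd₀C, hd₀⟩ := hcov p q ((t + nA) + nB) (Θ.relabel g) a b c ha2 hb2 hc
    (by rw [Language.Formula.realize_relabel, hcompat0]; exact hreal)
  refine ⟨fun j => if h : PB j then d₀ (eB ⟨j, h⟩) else b' j, fun j => ?_, ?_⟩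
  · dsimp only
    split_ifs with h
    · exact hd₀C _
    · rcases hb j with h' | h'
      · exact absurd h' h
      · exact h'
  · rw [Language.Formula.realize_relabel, hcompat d₀] at hd₀
    exact hd₀

/-- The key induction: starting from a `C`-definable finite "used-up" set `U`, as long as
`e ∉ U` we can enlarge `U` by a finite `C`-definable set meeting `F \ U`, and the measure
`(F \ U).ncard` strictly decreases.  Eventually `e ∈ U`, so `e ∈ Acl L C`. -/
lemma aux (C : Set M) (e : M)
    (n : ℕ) (φ : L.Formula (Fin n ⊕ Fin 1)) (a : Fin n → M)
    (m : ℕ) (ψ : L.Formula (Fin m ⊕ Fin 1)) (b : Fin m → M)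
    (hcov' : ∀ (t : ℕ) (Θ : L.Formula ((Fin n ⊕ Fin m) ⊕ Fin t)) (u : Fin t → M),
      (∀ i, u i ∈ C) → Θ.Realize (Sum.elim (Sum.elim a b) u) →
      ∃ d : Fin m → M, (∀ i, d i ∈ C) ∧ Θ.Realize (Sum.elim (Sum.elim a d) u))
    (hF : {y : M | φ.Realize (Sum.elim a (fun _ => y))}.Finite)
    (hS : {y : M | ψ.Realize (Sum.elim b (fun _ => y))}.Finite)
    (heF : φ.Realize (Sum.elim a (fun _ => e)))
    (heS : ψ.Realize (Sum.elim b (fun _ => e))) :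
    ∀ (N t : ℕ) (χ : L.Formula (Fin t ⊕ Fin 1)) (u : Fin t → M),
      (∀ i, u i ∈ C) →
      {y : M | χ.Realize (Sum.elim u (fun _ => y))}.Finite →
      ({y : M | φ.Realize (Sum.elim a (fun _ => y))} \
        {y : M | χ.Realize (Sum.elim u (fun _ => y))}).ncard ≤ N →
      e ∈ Acl L C := by
  classical
  set F : Set M := {y : M | φ.Realize (Sum.elim a (fun _ => y))} with hFdef
  set k : ℕ := {y : M | ψ.Realize (Sum.elim b (fun _ => y))}.ncard with hkdef
  intro N
  induction N with
  | zero =>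
    intro t χ u hu hUfin hcard
    by_cases he : χ.Realize (Sum.elim u (fun _ => e))
    · exact ⟨t, χ, u, hu, hUfin, he⟩
    · exfalso
      have hmem : e ∈ F \ {y : M | χ.Realize (Sum.elim u (fun _ => y))} := ⟨heF, he⟩
      have hfin : (F \ {y : M | χ.Realize (Sum.elim u (fun _ => y))}).Finite :=
        hF.subset Set.diff_subset
      have := (Set.ncard_pos hfin).2 ⟨e, hmem⟩
      omega
  | succ N ih =>
    intro t χ u hu hUfin hcard
    by_cases he : χ.Realize (Sum.elim u (fun _ => e))
    · exact ⟨t, χ, u, hu, hUfin, he⟩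
    -- build the formula Θ over (Fin n ⊕ Fin m) ⊕ Fin t
    set α := (Fin n ⊕ Fin m) ⊕ Fin t with hα
    let φ' : L.Formula (α ⊕ Fin 1) := φ.relabel (Sum.map (Sum.inl ∘ Sum.inl) id)
    let ψ' : L.Formula (α ⊕ Fin 1) := ψ.relabel (Sum.map (Sum.inl ∘ Sum.inr) id)
    let χ' : L.Formula (α ⊕ Fin 1) := χ.relabel (Sum.map Sum.inr id)
    let Θ₁ : L.Formula α := ((φ' ⊓ ψ') ⊓ χ'.not).iExs (Fin 1)
    let gg : Fin (k+1) → (Fin m ⊕ Fin 1) → (α ⊕ Fin (k+1)) := fun i =>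
      Sum.elim (fun j => Sum.inl (Sum.inl (Sum.inr j))) (fun _ => Sum.inr i)
    let ψi : Fin (k+1) → L.Formula (α ⊕ Fin (k+1)) := fun i => ψ.relabel (gg i)
    let body : L.Formula (α ⊕ Fin (k+1)) :=
      (Language.BoundedFormula.iInf ψi).imp
        (Language.BoundedFormula.iSup
          (fun pr : {pr : Fin (k+1) × Fin (k+1) // pr.1 ≠ pr.2} =>
            Language.Term.equal (Language.Term.var (Sum.inr pr.1.1))
            (Language.Term.var (Sum.inr pr.1.2))))
    let Θ₂ : L.Formula α := body.iAlls (Fin (k+1))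
    -- Θ₁ holds of (a, b, u)
    have hΘ₁ : Θ₁.Realize (Sum.elim (Sum.elim a b) u) := by
      rw [show Θ₁ = ((φ' ⊓ ψ') ⊓ χ'.not).iExs (Fin 1) from rfl,
        Language.Formula.realize_iExs]
      refine ⟨fun _ => e, ?_⟩
      have heq : (fun x : α ⊕ Fin 1 => Sum.elim (Sum.elim (Sum.elim a b) u) (fun _ => e) (id x))
          = Sum.elim (Sum.elim (Sum.elim a b) u) (fun _ => e) := rfl
      rw [Language.Formula.realize_inf, Language.Formula.realize_inf,
        Language.Formula.realize_not]
      refine ⟨⟨?_, ?_⟩, ?_⟩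
      · rw [show φ' = φ.relabel (Sum.map (Sum.inl ∘ Sum.inl) id) from rfl,
          Language.Formula.realize_relabel, elim_comp_map]
        exact heF
      · rw [show ψ' = ψ.relabel (Sum.map (Sum.inl ∘ Sum.inr) id) from rfl,
          Language.Formula.realize_relabel, elim_comp_map]
        exact heS
      · rw [show χ' = χ.relabel (Sum.map Sum.inr id) from rfl,
          Language.Formula.realize_relabel, elim_comp_map]
        exact he
    have hψival : ∀ (v : α → M) (ys : Fin (k+1) → M) (i : Fin (k+1)),
        (Sum.elim v ys) ∘ (gg i) =
          Sum.elim (fun j => v (Sum.inl (Sum.inr j))) (fun _ => ys i) := by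
      intro v ys i; funext x; cases x <;> rfl
    -- characterization of Θ₂
    have hΘ₂gen : ∀ (bb : Fin m → M),
        (∀ (ys : Fin (k+1) → M), (∀ i, ψ.Realize (Sum.elim bb (fun _ => ys i))) →
          ∃ i j : Fin (k+1), i ≠ j ∧ ys i = ys j) →
        Θ₂.Realize (Sum.elim (Sum.elim a bb) u) := by
      intro bb h
      rw [show Θ₂ = body.iAlls (Fin (k+1)) from rfl,
        Language.Formula.realize_iAlls]
      intro ys
      have heq : (fun x : α ⊕ Fin (k+1) => Sum.elim (Sum.elim (Sum.elim a bb) u) ys (id x))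
          = Sum.elim (Sum.elim (Sum.elim a bb) u) ys := rfl
      rw [show body = (Language.BoundedFormula.iInf ψi).imp
        (Language.BoundedFormula.iSup
          (fun pr : {pr : Fin (k+1) × Fin (k+1) // pr.1 ≠ pr.2} =>
            Language.Term.equal (Language.Term.var (Sum.inr pr.1.1))
            (Language.Term.var (Sum.inr pr.1.2)))) from rfl]
      rw [Language.Formula.Realize, Language.BoundedFormula.realize_imp]
      intro hall
      rw [Language.BoundedFormula.realize_iInf] at hall
      have hys : ∀ i, ψ.Realize (Sum.elim bb (fun _ => ys i)) := by
        intro i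
        have h2 : (Language.Formula.relabel (gg i) ψ).Realize
            (Sum.elim (Sum.elim (Sum.elim a bb) u) ys) := hall i
        rw [Language.Formula.realize_relabel, hψival] at h2
        exact h2
      obtain ⟨i, j, hij, hyij⟩ := h ys hys
      rw [Language.BoundedFormula.realize_iSup]
      refine ⟨⟨⟨i, j⟩, hij⟩, ?_⟩
      have : (Language.Term.equal (Language.Term.var (Sum.inr i) : L.Term (α ⊕ Fin (k+1)))
          (Language.Term.var (Sum.inr j))).Realize
          (Sum.elim (Sum.elim (Sum.elim a bb) u) ys) := by
        rw [Language.Formula.realize_equal]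
        simpa using hyij
      exact this
    have hΘ₂conv : ∀ (bb : Fin m → M),
        Θ₂.Realize (Sum.elim (Sum.elim a bb) u) →
        (∀ (ys : Fin (k+1) → M), (∀ i, ψ.Realize (Sum.elim bb (fun _ => ys i))) →
          ∃ i j : Fin (k+1), i ≠ j ∧ ys i = ys j) := by
      intro bb h ys hys
      rw [show Θ₂ = body.iAlls (Fin (k+1)) from rfl,
        Language.Formula.realize_iAlls] at h
      have h2 := h ys
      have heq : (fun x : α ⊕ Fin (k+1) => Sum.elim (Sum.elim (Sum.elim a bb) u) ys (id x))
          = Sum.elim (Sum.elim (Sum.elim a bb) u) ys := rfl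
      rw [show body = (Language.BoundedFormula.iInf ψi).imp
        (Language.BoundedFormula.iSup
          (fun pr : {pr : Fin (k+1) × Fin (k+1) // pr.1 ≠ pr.2} =>
            Language.Term.equal (Language.Term.var (Sum.inr pr.1.1))
            (Language.Term.var (Sum.inr pr.1.2)))) from rfl] at h2
      rw [Language.Formula.Realize, Language.BoundedFormula.realize_imp] at h2
      have hprem : Language.BoundedFormula.Realize
          (Language.BoundedFormula.iInf ψi)
          (Sum.elim (Sum.elim (Sum.elim a bb) u) ys) default := by
        rw [Language.BoundedFormula.realize_iInf]
        intro i
        have h3 : (Language.Formula.relabel (gg i) ψ).Realize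
            (Sum.elim (Sum.elim (Sum.elim a bb) u) ys) := by
          rw [Language.Formula.realize_relabel, hψival]
          exact hys i
        exact h3
      have hconc := h2 hprem
      rw [Language.BoundedFormula.realize_iSup] at hconc
      obtain ⟨⟨⟨i, j⟩, hmem⟩, heqq⟩ := hconc
      refine ⟨i, j, hmem, ?_⟩
      have h4 : (Language.Term.equal (Language.Term.var (Sum.inr i) : L.Term (α ⊕ Fin (k+1)))
          (Language.Term.var (Sum.inr j))).Realize
          (Sum.elim (Sum.elim (Sum.elim a bb) u) ys) := heqq
      rw [Language.Formula.realize_equal] at h4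
      simpa using h4
    -- original b realizes Θ₂ (its solution set has exactly k elements)
    have hbΘ₂ : Θ₂.Realize (Sum.elim (Sum.elim a b) u) := by
      apply hΘ₂gen
      intro ys hys
      by_contra hno
      push_neg at hno
      let f : Fin (k+1) → hS.toFinset := fun i =>
        ⟨ys i, by rw [Set.Finite.mem_toFinset]; exact hys i⟩
      have hcardlt : Fintype.card hS.toFinset < Fintype.card (Fin (k+1)) := by
        rw [Fintype.card_coe, Fintype.card_fin]
        have hcc : {y : M | ψ.Realize (Sum.elim b (fun _ => y))}.ncard = hS.toFinset.card :=
          Set.ncard_eq_toFinset_card _ hS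
        omega
      obtain ⟨i, j, hij, hfij⟩ := Fintype.exists_ne_map_eq_of_card_lt f hcardlt
      exact hno i j hij (by simpa [f, Subtype.ext_iff] using hfij)
    -- apply covering
    obtain ⟨d, hdC, hdΘ⟩ := hcov' t (Θ₁ ⊓ Θ₂) u hu
      (by rw [Language.Formula.realize_inf]; exact ⟨hΘ₁, hbΘ₂⟩)
    rw [Language.Formula.realize_inf] at hdΘ
    obtain ⟨hdΘ₁, hdΘ₂⟩ := hdΘ
    -- extract a witness y₀ ∈ (F ∩ S_d) \ U
    rw [show Θ₁ = ((φ' ⊓ ψ') ⊓ χ'.not).iExs (Fin 1) from rfl,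
      Language.Formula.realize_iExs] at hdΘ₁
    obtain ⟨w, hw⟩ := hdΘ₁
    have hweq : Sum.elim (Sum.elim (Sum.elim a d) u) w
        = Sum.elim (Sum.elim (Sum.elim a d) u) (fun _ => w 0) := by
      funext x
      cases x with
      | inl y => rfl
      | inr y => simp [Subsingleton.elim y 0]
    rw [hweq, Language.Formula.realize_inf, Language.Formula.realize_inf,
      Language.Formula.realize_not] at hw
    obtain ⟨⟨hwφ, hwψ⟩, hwχ⟩ := hw
    rw [show φ' = φ.relabel (Sum.map (Sum.inl ∘ Sum.inl) id) from rfl,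
      Language.Formula.realize_relabel, elim_comp_map] at hwφ
    rw [show ψ' = ψ.relabel (Sum.map (Sum.inl ∘ Sum.inr) id) from rfl,
      Language.Formula.realize_relabel, elim_comp_map] at hwψ
    rw [show χ' = χ.relabel (Sum.map Sum.inr id) from rfl,
      Language.Formula.realize_relabel, elim_comp_map] at hwχ
    set y₀ := w 0 with hy₀
    -- S_d is finite
    set Sd : Set M := {y : M | ψ.Realize (Sum.elim d (fun _ => y))} with hSddef
    have hSdfin : Sd.Finite := by
      by_contra hinf
      obtain ⟨s, hs_sub, hs_card⟩ := Set.Infinite.exists_subset_card_eq hinf (k + 1)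
      let eq1 : Fin (k+1) ≃ {x // x ∈ s} := (finCongr hs_card).symm.trans s.equivFin.symm
      let ys : Fin (k+1) → M := fun i => (eq1 i : M)
      have hysS : ∀ i, ψ.Realize (Sum.elim d (fun _ => ys i)) := fun i => hs_sub (eq1 i).2
      obtain ⟨i, j, hij, hyij⟩ := hΘ₂conv d hdΘ₂ ys hysS
      exact hij (eq1.injective (Subtype.ext hyij))
    -- the enlarged C-definable set U'' = U ∪ S_d
    let χ'' : L.Formula (Fin (t + m) ⊕ Fin 1) :=
      (χ.relabel (Sum.map (Fin.castAdd m) id)) ⊔ (ψ.relabel (Sum.map (Fin.natAdd t) id))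
    let u'' : Fin (t + m) → M := Fin.append u d
    have hcastu : u'' ∘ Fin.castAdd m = u := by
      funext i; exact Fin.append_left u d i
    have hnatd : u'' ∘ Fin.natAdd t = d := by
      funext i; exact Fin.append_right u d i
    have hU'' : {y : M | χ''.Realize (Sum.elim u'' (fun _ => y))} =
        {y : M | χ.Realize (Sum.elim u (fun _ => y))} ∪ Sd := by
      ext y
      simp only [Set.mem_setOf_eq, Set.mem_union,
        show χ'' = (χ.relabel (Sum.map (Fin.castAdd m) id)) ⊔
          (ψ.relabel (Sum.map (Fin.natAdd t) id)) from rfl,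
        Language.Formula.realize_sup, Language.Formula.realize_relabel,
        elim_comp_map, hcastu, hnatd]
      exact Iff.rfl
    have hu''C : ∀ i, u'' i ∈ C := by
      intro i
      induction i using Fin.addCases with
      | left i => ?_
      | right i => ?_
      case left => simpa [u'', Fin.append_left] using hu i
      case right => simpa [u'', Fin.append_right] using hdC i
    have hU''fin : {y : M | χ''.Realize (Sum.elim u'' (fun _ => y))}.Finite := by
      rw [hU'']
      exact hUfin.union hSdfin
    -- the measure strictly decreases
    have hy₀mem : y₀ ∈ (F \ {y : M | χ.Realize (Sum.elim u (fun _ => y))}) \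
        (F \ {y : M | χ''.Realize (Sum.elim u'' (fun _ => y))}) := by
      refine ⟨⟨hwφ, hwχ⟩, ?_⟩
      intro hcontra
      apply hcontra.2
      rw [hU'']
      exact Or.inr hwψ
    have hss : F \ {y : M | χ''.Realize (Sum.elim u'' (fun _ => y))} ⊂
        F \ {y : M | χ.Realize (Sum.elim u (fun _ => y))} := by
      constructor
      · intro y hy
        refine ⟨hy.1, fun hyU => hy.2 ?_⟩
        rw [hU'']
        exact Or.inl hyU
      · intro hsub
        exact hy₀mem.2 (hsub hy₀mem.1)
    have hlt : (F \ {y : M | χ''.Realize (Sum.elim u'' (fun _ => y))}).ncard <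
        (F \ {y : M | χ.Realize (Sum.elim u (fun _ => y))}).ncard :=
      Set.ncard_lt_ncard hss (hF.subset Set.diff_subset)
    exact ih (t + m) χ'' u'' hu''C hU''fin (by omega)

end CoverAclAux

/-- The covering relation implies algebraic independence: if `C` covers `A` in `B`,
then `acl(A ∪ C) ∩ acl(B ∪ C) ⊆ acl(C)`. -/
theorem cover_implies_aclIndep (L : FirstOrder.Language) {M : Type*} [L.Structure M]
    (A B C : Set M)
    (hcov : ∀ (p q r : ℕ) (φ : L.Formula ((Fin p ⊕ Fin q) ⊕ Fin r))
      (a : Fin p → M) (b : Fin q → M) (c : Fin r → M),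
      (∀ i, a i ∈ A) → (∀ i, b i ∈ B) → (∀ i, c i ∈ C) →
      φ.Realize (Sum.elim (Sum.elim a b) c) →
      ∃ d : Fin q → M, (∀ i, d i ∈ C) ∧ φ.Realize (Sum.elim (Sum.elim a d) c)) :
    Acl L (A ∪ C) ∩ Acl L (B ∪ C) ⊆ Acl L C := by
  rintro e ⟨⟨n, φ, a, ha, hF, heF⟩, ⟨m, ψ, b, hb, hS, heS⟩⟩
  have hcov' : ∀ (t : ℕ) (Θ : L.Formula ((Fin n ⊕ Fin m) ⊕ Fin t)) (u : Fin t → M),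
      (∀ i, u i ∈ C) → Θ.Realize (Sum.elim (Sum.elim a b) u) →
      ∃ d : Fin m → M, (∀ i, d i ∈ C) ∧ Θ.Realize (Sum.elim (Sum.elim a d) u) :=
    fun t Θ u hu hreal =>
      CoverAclAux.cover_union A B C hcov n m t Θ a b u ha hb hu hreal
  exact CoverAclAux.aux C e n φ a m ψ b hcov' hF hS heF heS
    ({y : M | φ.Realize (Sum.elim a (fun _ => y))}.ncard) 0 ⊥ (fun i => i.elim0)
    (fun i => i.elim0)
    (by
      have : {y : M | (⊥ : L.Formula (Fin 0 ⊕ Fin 1)).Realize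
          (Sum.elim (fun i => i.elim0) (fun _ => y))} = ∅ := by
        ext y
        simp [Language.Formula.realize_bot]
      rw [this]
      exact Set.finite_empty)
    (by
      apply Set.ncard_le_ncard _ hF
      intro y hy
      exact hy.1)
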